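/- arXiv:1301.3409 — 5 statements merged into one kernel-verified Lean document; each statement's English description precedes it below -/
import Mathlib

section
/- In a Frobenius group FH with kernel F and complement H, no nontrivial element of the complement H fixes (by conjugation) a nontrivial coset of any subgroup of the kernel F. Equivalently: if h ∈ H, h ≠ 1, K ≤ F is a subgroup, and x ∈ F with xK ≠ K and (xK)^h = xK (as a coset, under the conjugation action of h on F), then a contradiction follows. -/
open Pointwise

/-- In a Frobenius group FH (finite, with normal kernel F, complement H acting
fixed-point-freely on F), no nontrivial element h of the complement fixes, under
conjugation, a nontrivial coset xK of a subgroup K of the kernel F. -/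
theorem stmt_0 {G : Type*} [Group G] [Fintype G]
    (F H : Subgroup G) (hFN : F.Normal) (hcompl : Subgroup.IsComplement' F H)
    (hfrob : ∀ h ∈ H, h ≠ 1 → ∀ f ∈ F, h * f * h⁻¹ = f → f = 1)
    (h : G) (hh : h ∈ H) (hh1 : h ≠ 1)
    (K : Subgroup G) (hKF : K ≤ F)
    (x : G) (hxF : x ∈ F) (hxK : x ∉ K)
    (hfix : (fun g => h * g * h⁻¹) '' (x • (K : Set G)) = x • (K : Set G)) :
    False := by
  -- x itself is in the coset
  have hxmem : x ∈ x • (K : Set G) := ⟨1, K.one_mem, by simp⟩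
  -- φ(x) ∈ xK, get c ∈ K with h*x*h⁻¹ = x*c
  have hφx : h * x * h⁻¹ ∈ x • (K : Set G) := by
    rw [← hfix]; exact ⟨x, hxmem, rfl⟩
  obtain ⟨c, hcK, hc⟩ := hφx
  simp only [smul_eq_mul] at hc
  -- c : G, hcK : c ∈ K, hc : x * c = h * x * h⁻¹
  -- φ maps K into K
  have hφK : ∀ k ∈ K, h * k * h⁻¹ ∈ K := by
    intro k hk
    have hmem : h * (x * k) * h⁻¹ ∈ x • (K : Set G) := by
      rw [← hfix]; exact ⟨x * k, ⟨k, hk, rfl⟩, rfl⟩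
    obtain ⟨k₁, hk₁, hk₁e⟩ := hmem
    simp only [smul_eq_mul] at hk₁e
    have : h * k * h⁻¹ = c⁻¹ * k₁ := by
      have h1 : (x * c) * (h * k * h⁻¹) = x * k₁ := by
        rw [hc]
        group
        group at hk₁e
        exact hk₁e.symm
      have h2 : c * (h * k * h⁻¹) = k₁ := by
        have := mul_left_cancel (by rw [← mul_assoc]; exact h1 : x * (c * (h * k * h⁻¹)) = x * k₁)
        exact this
      rw [← h2]; group
    rw [this]; exact K.mul_mem (K.inv_mem hcK) hk₁
  -- the twisted map on K is injective
  have hδinj : ∀ k ∈ K, ∀ k' ∈ K, (k : G)⁻¹ * (h * k * h⁻¹) = k'⁻¹ * (h * k' * h⁻¹) → k = k' := by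
    intro k hk k' hk' he
    have hfe : h * (k' * k⁻¹) * h⁻¹ = k' * k⁻¹ := by
      have : k' * k⁻¹ = (h * k' * h⁻¹) * (h * k * h⁻¹)⁻¹ := by
        have := congrArg (fun g => k' * g * (h * k * h⁻¹)⁻¹) he
        group at this ⊢
        rw [this]
      calc h * (k' * k⁻¹) * h⁻¹ = (h * k' * h⁻¹) * (h * k * h⁻¹)⁻¹ := by group
        _ = k' * k⁻¹ := this.symm
    have := hfrob h hh hh1 (k' * k⁻¹) (F.mul_mem (hKF hk') (F.inv_mem (hKF hk))) hfe
    have : k' = k := by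
      have := congrArg (fun g => g * k) this
      simpa using this
    exact this.symm
  -- bijection on the subtype
  let δ : K → K := fun k => ⟨(k : G)⁻¹ * (h * k * h⁻¹), K.mul_mem (K.inv_mem k.2) (hφK k k.2)⟩
  have hinj : Function.Injective δ := by
    intro a b hab
    exact Subtype.ext (hδinj a a.2 b b.2 (congrArg Subtype.val hab))
  have hsurj : Function.Surjective δ := Finite.surjective_of_injective hinj
  obtain ⟨⟨k, hkK⟩, hkδ⟩ := hsurj ⟨c, hcK⟩
  have hkc : k⁻¹ * (h * k * h⁻¹) = c := congrArg Subtype.val hkδ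
  -- a := x * k⁻¹ is fixed by conjugation by h
  have hfixa : h * (x * k⁻¹) * h⁻¹ = x * k⁻¹ := by
    have hφk : h * k * h⁻¹ = k * c := by
      rw [← hkc]; group
    calc h * (x * k⁻¹) * h⁻¹ = (h * x * h⁻¹) * (h * k * h⁻¹)⁻¹ := by group
      _ = (x * c) * (k * c)⁻¹ := by rw [← hc, hφk]
      _ = x * k⁻¹ := by group
  have haF : x * k⁻¹ ∈ F := F.mul_mem hxF (F.inv_mem (hKF hkK))
  have := hfrob h hh hh1 (x * k⁻¹) haF hfixa
  have hxk : x = k := by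
    have := congrArg (fun g => g * k) this
    simpa using this
  exact hxK (hxk ▸ hkK)
end

section
/- Let FH be a Frobenius group with kernel F and complement H. Suppose FH acts on a set (or by automorphisms on a group) in such a way that the induced action of F is nontrivial. Then the complement H acts faithfully. -/
/-- If a Frobenius group FH = F ⋊ H acts on a set X with F acting nontrivially,
then the complement H acts faithfully. -/
theorem stmt_1 {G : Type*} [Group G] [Fintype G] {X : Type*} [MulAction G X]
    (F H : Subgroup G) (hFN : F.Normal) (hcompl : Subgroup.IsComplement' F H)
    (hfrob : ∀ h ∈ H, h ≠ 1 → ∀ f ∈ F, h * f * h⁻¹ = f → f = 1)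
    (hFnontriv : ∃ f ∈ F, ∃ x : X, f • x ≠ x) :
    ∀ h ∈ H, (∀ x : X, h • x = x) → h = 1 := by
  intro h hH hfix
  by_contra hne
  obtain ⟨f, hf, x, hx⟩ := hFnontriv
  have hconjmem : ∀ g : F, h * (g : G) * h⁻¹ * (g : G)⁻¹ ∈ F := fun g =>
    F.mul_mem (hFN.conj_mem g g.2 h) (F.inv_mem g.2)
  let φ : F → F := fun g => ⟨h * (g : G) * h⁻¹ * (g : G)⁻¹, hconjmem g⟩
  have hinj : Function.Injective φ := by
    intro g₁ g₂ heq
    have heq' : (h * (g₁ : G) * h⁻¹ * (g₁ : G)⁻¹ : G) = h * (g₂ : G) * h⁻¹ * (g₂ : G)⁻¹ :=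
      congrArg Subtype.val heq
    have key : h * ((g₂ : G)⁻¹ * (g₁ : G)) * h⁻¹ = (g₂ : G)⁻¹ * (g₁ : G) := by
      have h1 : (g₁ : G) * h⁻¹ * (g₁ : G)⁻¹ = (g₂ : G) * h⁻¹ * (g₂ : G)⁻¹ := by
        apply mul_left_cancel (a := h)
        simpa [mul_assoc] using heq'
      have h2 : (g₂ : G)⁻¹ * (g₁ : G) * h⁻¹ = h⁻¹ * ((g₂ : G)⁻¹ * (g₁ : G)) := by
        have := congrArg (fun y => (g₂ : G)⁻¹ * y * (g₁ : G)) h1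
        simpa [mul_assoc] using this
      have := congrArg (fun y => h * y) h2
      simpa [mul_assoc] using this
    have : (g₂ : G)⁻¹ * (g₁ : G) = 1 :=
      hfrob h hH hne _ (F.mul_mem (F.inv_mem g₂.2) g₁.2) key
    have : (g₁ : G) = g₂ := by
      rw [inv_mul_eq_one] at this; exact this.symm
    exact Subtype.ext this
  have hsurj : Function.Surjective φ := Finite.injective_iff_surjective.mp hinj
  obtain ⟨g, hg⟩ := hsurj ⟨f, hf⟩
  have hfeq : f = h * (g : G) * h⁻¹ * (g : G)⁻¹ := (congrArg Subtype.val hg).symm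
  have hfixinv : ∀ y : X, h⁻¹ • y = y := fun y => by
    conv_lhs => rw [← hfix y]
    simp
  apply hx
  rw [hfeq]
  simp only [mul_smul, hfix, hfixinv, smul_inv_smul]
end

section
/- Let M = ⊕_{h∈H} M_h be a free kH-module structure where the subspaces M_h form a regular H-orbit (M_{h₁}h₂ = M_{h₁h₂}), and let c be a linear operator on M commuting with the H-action that leaves each M_h invariant. If c acts trivially on the fixed-point subspace C_M(H), then c acts trivially on all of M. -/
/-- Let M = ⊕_{h∈H} M_h be a free kH-module structure, the subspaces M_h forming a
regular H-orbit (M_{h₁}·h₂ = M_{h₁h₂}).  If a k-linear operator c on M leaves each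
M_h invariant and fixes the H-fixed points pointwise, then c is the identity. -/
theorem stmt_4 {k : Type*} [Field k] {M : Type*} [AddCommGroup M] [Module k M]
    {H : Type*} [Group H] [Fintype H] [DecidableEq H]
    [DistribMulAction H M] [SMulCommClass H k M]
    (A : H → Submodule k M) (hint : DirectSum.IsInternal A)
    (hreg : ∀ h₁ h₂ : H, (A h₁).map (DistribMulAction.toLinearMap k M h₂) = A (h₁ * h₂))
    (c : M →ₗ[k] M)
    (hcinv : ∀ h : H, (A h).map c ≤ A h)
    (hcfix : ∀ v : M, (∀ h : H, h • v = v) → c v = v) :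
    ∀ v : M, c v = v := by
  have key : ∀ h : H, ∀ v ∈ A h, c v = v := by
    intro h v hv
    have mem1 : ∀ g : H, (h⁻¹ * g) • v ∈ A g := by
      intro g
      have : (h⁻¹ * g) • v ∈ A (h * (h⁻¹ * g)) := by
        rw [← hreg]
        exact ⟨v, hv, rfl⟩
      simpa [mul_inv_cancel_left] using this
    have mem2 : ∀ g : H, c ((h⁻¹ * g) • v) ∈ A g := fun g =>
      hcinv g ⟨_, mem1 g, rfl⟩
    set w : M := ∑ g : H, (h⁻¹ * g) • v with hw
    have hwfix : ∀ g' : H, g' • w = w := by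
      intro g'
      rw [hw, Finset.smul_sum]
      refine Fintype.sum_bijective (fun g => h * g' * h⁻¹ * g) (Group.mulLeft_bijective _) _ _ ?_
      intro g
      rw [smul_smul]
      congr 1
      group
    have hcw : c w = w := hcfix w hwfix
    -- express w and c w as images of direct sums
    set x : DirectSum H (fun g => A g) := ∑ g : H, DirectSum.of (fun g => A g) g ⟨_, mem1 g⟩ with hx
    set y : DirectSum H (fun g => A g) := ∑ g : H, DirectSum.of (fun g => A g) g ⟨_, mem2 g⟩ with hy
    have hxy : DirectSum.coeAddMonoidHom A x = DirectSum.coeAddMonoidHom A y := by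
      rw [hx, hy, map_sum, map_sum]
      simp only [DirectSum.coeAddMonoidHom_of]
      rw [← hw, ← map_sum, ← hw, hcw]
    have hxyy : x = y := hint.injective hxy
    have := DFunLike.congr_fun hxyy h
    rw [hx, hy, DFinsupp.finset_sum_apply, DFinsupp.finset_sum_apply] at this
    simp only [DirectSum.of_apply] at this
    rw [Finset.sum_eq_single h (by intro b _ hb; simp [hb]) (by simp),
        Finset.sum_eq_single h (by intro b _ hb; simp [hb]) (by simp)] at this
    simp only [dif_pos rfl] at this
    have h2 : ((h⁻¹ * h) • v : M) = c ((h⁻¹ * h) • v) := congrArg Subtype.val this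
    simpa using h2.symm
  intro v
  have hv : v ∈ (⨆ g : H, A g) := by
    rw [hint.submodule_iSup_eq_top]; trivial
  induction hv using Submodule.iSup_induction' with
  | mem g x hx => exact key g x hx
  | zero => simp
  | add x _ y _ hx hy => rw [map_add, hx, hy]
end

section
/- Let G be a finite group, φ an automorphism of order n coprime to |G|, and u, x, y, ..., z ∈ G with φ-terms u_j, x_{i_1}, ..., z_{i_k} in the extended associated Lie ring L = L(G) ⊗ ℤ[ω,1/n], where j + i_1 + ... + i_k ≡ 0 (mod n). If for all tuples (a_1,...,a_k) ∈ (ℤ/nℤ)^k the group-theoretic congruence ∏_{t=0}^{n-1} [u, x^{φ^{a_1}}, y^{φ^{a_2}}, ..., z^{φ^{a_k}}]^{φ^t} ≡ 1 (mod γ_{k+2}(G)) holds, then [u_j, x_{i_1}, y_{i_2}, ..., z_{i_k}] = 0 in L. -/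
section StmtAux

lemma stmt17_pow_mod {M : Type*} [Monoid M] {E : M} {n : ℕ} (hord : E ^ n = 1)
    (m : ℕ) : E ^ m = E ^ (m % n) := by
  conv_lhs => rw [← Nat.div_add_mod m n]
  rw [pow_add, pow_mul, hord, one_pow, one_mul]

lemma stmt17_sum_range_eq_sum_zmod {M : Type*} [AddCommMonoid M] (m : ℕ) (f : ℕ → M) :
    ∑ t ∈ Finset.range (m+1), f t = ∑ t : ZMod (m+1), f t.val := by
  rw [← Fin.sum_univ_eq_sum_range]; rfl

variable {R L : Type*} [CommRing R] [LieRing L] [LieAlgebra R L]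

lemma stmt17_sum_lie {ι : Type*} (s : Finset ι) (f : ι → L) (y : L) :
    ⁅∑ i ∈ s, f i, y⁆ = ∑ i ∈ s, ⁅f i, y⁆ := by
  induction s using Finset.cons_induction with
  | empty => simp
  | cons a s ha ih => simp [Finset.sum_cons, add_lie, ih]

lemma stmt17_lie_sum {ι : Type*} (s : Finset ι) (f : ι → L) (y : L) :
    ⁅y, ∑ i ∈ s, f i⁆ = ∑ i ∈ s, ⁅y, f i⁆ := by
  induction s using Finset.cons_induction with
  | empty => simp
  | cons a s ha ih => simp [Finset.sum_cons, lie_add, ih]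

lemma stmt17_epow_bracket {E : L →ₗ[R] L} (hEbr : ∀ a b : L, E ⁅a, b⁆ = ⁅E a, E b⁆) (t : ℕ)
    (a b : L) : (E ^ t) ⁅a, b⁆ = ⁅(E ^ t) a, (E ^ t) b⁆ := by
  induction t with
  | zero => simp
  | succ t ih => simp only [pow_succ', Module.End.mul_apply, ih, hEbr]

lemma stmt17_foldl_lie_add (l : List L) (v w : L) :
    l.foldl (fun acc z => ⁅acc, z⁆) (v + w)
      = l.foldl (fun acc z => ⁅acc, z⁆) v + l.foldl (fun acc z => ⁅acc, z⁆) w := by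
  induction l generalizing v w with
  | nil => rfl
  | cons z l ih => simp only [List.foldl_cons, add_lie]; exact ih _ _

lemma stmt17_foldl_lie_smul (l : List L) (c : R) (v : L) :
    l.foldl (fun acc z => ⁅acc, z⁆) (c • v)
      = c • l.foldl (fun acc z => ⁅acc, z⁆) v := by
  induction l generalizing v with
  | nil => rfl
  | cons z l ih => simp only [List.foldl_cons, smul_lie]; exact ih _

/-- The left-normed bracket fold as a linear map in the initial argument. -/
def stmt17BrFold (R : Type*) {L : Type*} [CommRing R] [LieRing L] [LieAlgebra R L]
    (l : List L) : L →ₗ[R] L where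
  toFun v := l.foldl (fun acc z => ⁅acc, z⁆) v
  map_add' := stmt17_foldl_lie_add l
  map_smul' c v := stmt17_foldl_lie_smul l c v

@[simp] lemma stmt17BrFold_apply (l : List L) (v : L) :
    stmt17BrFold R l v = l.foldl (fun acc z => ⁅acc, z⁆) v := rfl

/-- The φ-term `u_j` in the extended Lie ring. -/
def stmt17T (νi ρ : R) (E : L →ₗ[R] L) (N j : ℕ) (u : L) : L :=
  νi • ∑ t ∈ Finset.range N, ρ ^ (j * t) • (E ^ t) u

lemma stmt17_key (m : ℕ) (ρ νi : R) (hρ : ρ ^ (m+1) = 1)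
    (E : L →ₗ[R] L) (hEbr : ∀ a b : L, E ⁅a, b⁆ = ⁅E a, E b⁆) (hord : E ^ (m+1) = 1)
    (j i : ℕ) (u v : L) :
    ⁅stmt17T νi ρ E (m+1) j u, stmt17T νi ρ E (m+1) i v⁆
      = stmt17T νi ρ E (m+1) (j+i)
          (νi • ∑ a ∈ Finset.range (m+1), ρ ^ (i * a) • ⁅u, (E ^ a) v⁆) := by
  have hrmod : ∀ c d : ℕ, ρ ^ (c * d) = ρ ^ ((c * d) % (m+1)) :=
    fun c d => stmt17_pow_mod hρ _
  have hrval : ∀ (c : ℕ) (s t : ZMod (m+1)),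
      ρ ^ (c * (s + t).val) = ρ ^ (c * s.val) * ρ ^ (c * t.val) := by
    intro c s t
    rw [← pow_add, ← mul_add, hrmod, hrmod c (s.val + t.val)]
    congr 1
    rw [ZMod.val_add, Nat.mul_mod, Nat.mod_mod_of_dvd, ← Nat.mul_mod]
    exact dvd_refl _
  have hEval : ∀ (s t : ZMod (m+1)) (w : L),
      (E ^ (s + t).val) w = (E ^ s.val) ((E ^ t.val) w) := by
    intro s t w
    rw [ZMod.val_add, ← stmt17_pow_mod hord, pow_add]
    rfl
  unfold stmt17T
  rw [stmt17_sum_range_eq_sum_zmod, stmt17_sum_range_eq_sum_zmod,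
    stmt17_sum_range_eq_sum_zmod, stmt17_sum_range_eq_sum_zmod]
  rw [smul_lie, lie_smul, stmt17_sum_lie]
  simp only [smul_lie, stmt17_lie_sum, lie_smul, Finset.smul_sum, map_smul, map_sum,
    smul_smul]
  refine Finset.sum_congr rfl fun s _ => ?_
  rw [← Equiv.sum_comp (Equiv.addLeft s) (fun t : ZMod (m + 1) =>
    (νi * (νi * (ρ ^ (i * t.val) * ρ ^ (j * s.val)))) • ⁅(E ^ s.val) u, (E ^ t.val) v⁆)]
  refine Finset.sum_congr rfl fun a _ => ?_
  show (νi * (νi * (ρ ^ (i * (s + a).val) * ρ ^ (j * s.val)))) •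
      ⁅(E ^ s.val) u, (E ^ (s + a).val) v⁆ = _
  rw [hEval s a, ← stmt17_epow_bracket hEbr, hrval i s a, add_mul, pow_add]
  congr 1
  ring

lemma stmt17_master (m : ℕ) (ρ νi : R) (hρ : ρ ^ (m+1) = 1)
    (E : L →ₗ[R] L) (hEbr : ∀ a b : L, E ⁅a, b⁆ = ⁅E a, E b⁆) (hord : E ^ (m+1) = 1) :
    ∀ (p : List (ℕ × L)) (j : ℕ) (u : L),
      (j + (p.map Prod.fst).sum) % (m+1) = 0 →
      (∀ a : List ℕ, a.length = p.length →
        ∑ t ∈ Finset.range (m+1), (E ^ t)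
          ((List.zipWith (fun b (q : ℕ × L) => (E ^ b) q.2) a p).foldl
            (fun acc z => ⁅acc, z⁆) u) = 0) →
      (p.map fun q => stmt17T νi ρ E (m+1) q.1 q.2).foldl (fun acc z => ⁅acc, z⁆)
        (stmt17T νi ρ E (m+1) j u) = 0 := by
  have hSapp : ∀ w : L, (∑ t ∈ Finset.range (m+1), E ^ t : L →ₗ[R] L) w
      = ∑ t ∈ Finset.range (m+1), (E ^ t) w := fun w => by
    simp [LinearMap.sum_apply]
  intro p
  induction p with
  | nil =>
    intro j u hj hva
    have h0 := hva [] rfl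
    simp only [List.zipWith_nil_right, List.foldl_nil] at h0
    unfold stmt17T
    have hone : ∀ t ∈ Finset.range (m+1), ρ ^ (j * t) • (E ^ t) u = (E ^ t) u := by
      intro t _
      have hdvd : (m+1) ∣ j * t :=
        (Nat.dvd_of_mod_eq_zero (by simpa using hj)).mul_right t
      have hz : (j * t) % (m+1) = 0 := Nat.mod_eq_zero_of_dvd hdvd
      rw [stmt17_pow_mod hρ, hz, pow_zero, one_smul]
    rw [Finset.sum_congr rfl hone, h0, smul_zero]
    simp
  | cons q p ih =>
    intro j u hj hva
    obtain ⟨i0, v⟩ := q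
    simp only [List.map_cons, List.foldl_cons]
    rw [stmt17_key m ρ νi hρ E hEbr hord j i0 u v]
    apply ih (j + i0)
    · simpa [add_assoc] using hj
    · intro a ha
      have expand : (List.zipWith (fun b (q : ℕ × L) => (E ^ b) q.2) a p).foldl
            (fun acc z => ⁅acc, z⁆)
            (νi • ∑ b ∈ Finset.range (m+1), ρ ^ (i0 * b) • ⁅u, (E ^ b) v⁆)
          = νi • ∑ b ∈ Finset.range (m+1), ρ ^ (i0 * b) •
              (List.zipWith (fun b (q : ℕ × L) => (E ^ b) q.2) (b :: a)
                ((i0, v) :: p)).foldl (fun acc z => ⁅acc, z⁆) u := by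
        rw [← stmt17BrFold_apply (R := R), map_smul, map_sum]
        simp only [map_smul, stmt17BrFold_apply, List.zipWith_cons_cons, List.foldl_cons]
      rw [← hSapp, expand, map_smul, map_sum,
        Finset.sum_congr rfl fun b _ => by
          rw [map_smul, hSapp, hva (b :: a) (by simp [ha]), smul_zero]]
      simp

end StmtAux



/-- Vanishing criterion for brackets of φ-terms (Lie-ring form of Lemma on
group congruences).  Let L be a Lie ring over a commutative ring R containing an
invertible element ν = n and a unit ω with ωⁿ = 1; let E be a bracket-preserving
endomorphism with Eⁿ = 1 (the action of φ).  Let u, x₁, …, x_k ∈ L and indices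
j, i₁, …, i_k with j + i₁ + ⋯ + i_k ≡ 0 (mod n).  If for every tuple
(a₁, …, a_k) the "orbit sums" ∑_{t<n} E^t [u, E^{a₁}x₁, …, E^{a_k}x_k] vanish,
then the left-normed bracket of the φ-terms [u_j, (x₁)_{i₁}, …, (x_k)_{i_k}]
is zero. -/
theorem stmt_17 {R L : Type*} [CommRing R] [LieRing L] [LieAlgebra R L]
    (n : ℕ) (hn : 0 < n) (ω ν : Rˣ)
    (hω : (ω : R) ^ n = 1) (hν : (ν : R) = (n : R))
    (E : L →ₗ[R] L) (hEbr : ∀ a b : L, E ⁅a, b⁆ = ⁅E a, E b⁆) (hord : E ^ n = 1)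
    (k : ℕ) (u : L) (x : Fin k → L)
    (j : ℕ) (i : Fin k → ℕ)
    (hzero : (j + ∑ s, i s) % n = 0)
    (hyp : ∀ a : Fin k → ℕ,
      ∑ t ∈ Finset.range n,
        (E ^ t) ((List.ofFn fun s => (E ^ (a s)) (x s)).foldl
          (fun acc z => ⁅acc, z⁆) u) = 0) :
    List.foldl (fun acc z => ⁅acc, z⁆)
        (((ν⁻¹ : Rˣ) : R) •
          ∑ t ∈ Finset.range n, ((ω ^ (-((j * t : ℕ) : ℤ)) : Rˣ) : R) • (E ^ t) u)
        (List.ofFn fun s : Fin k =>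
          ((ν⁻¹ : Rˣ) : R) •
            ∑ t ∈ Finset.range n, ((ω ^ (-((i s * t : ℕ) : ℤ)) : Rˣ) : R) • (E ^ t) (x s))
      = 0 := by
  obtain ⟨m, rfl⟩ : ∃ m, n = m + 1 := ⟨n - 1, by omega⟩
  set νi : R := ((ν⁻¹ : Rˣ) : R) with hνi
  set ρ : R := ((ω⁻¹ : Rˣ) : R) with hρdef
  have hωu : ω ^ (m+1) = 1 := by
    ext
    rw [Units.val_pow_eq_pow_val, hω, Units.val_one]
  have hρ : ρ ^ (m+1) = 1 := by
    rw [hρdef, ← Units.val_pow_eq_pow_val, inv_pow, hωu, inv_one, Units.val_one]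
  have hcoef : ∀ M : ℕ, ((ω ^ (-(M : ℤ)) : Rˣ) : R) = ρ ^ M := by
    intro M
    rw [zpow_neg, zpow_natCast, ← inv_pow, ← Units.val_pow_eq_pow_val]
  simp only [hcoef]
  show (List.ofFn fun s : Fin k => stmt17T νi ρ E (m+1) (i s) (x s)).foldl
      (fun acc z => ⁅acc, z⁆) (stmt17T νi ρ E (m+1) j u) = 0
  have hmap : (List.ofFn fun s : Fin k => stmt17T νi ρ E (m+1) (i s) (x s))
      = (List.ofFn fun s : Fin k => (i s, x s)).map
          (fun q => stmt17T νi ρ E (m+1) q.1 q.2) := by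
    rw [List.map_ofFn]; rfl
  rw [hmap]
  apply stmt17_master m ρ νi hρ E hEbr hord _ j u
  · simpa [List.map_ofFn, List.sum_ofFn, Function.comp] using hzero
  · intro a ha
    have hlen : a.length = k := by simpa using ha
    have hzip : List.zipWith (fun b (q : ℕ × L) => (E ^ b) q.2) a
          (List.ofFn fun s : Fin k => (i s, x s))
        = List.ofFn fun s : Fin k =>
            (E ^ (a.get ⟨(s : ℕ), by rw [hlen]; exact s.isLt⟩)) (x s) := by
      apply List.ext_getElem
      · simp [hlen]
      · intro idx h1 h2
        simp [List.getElem_zipWith, List.getElem_ofFn, List.get_eq_getElem]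
    rw [hzip]
    exact hyp fun s => a.get ⟨(s : ℕ), by rw [hlen]; exact s.isLt⟩
end

section
/- Let G be a finite group, φ an automorphism of order n coprime to |G|, and fix elements x, y, ..., z ∈ G (a tuple v⃗ of length k) and a tuple a⃗ = (a_1,...,a_k) of elements of ℤ/nℤ. Then the map θ_{v⃗,a⃗}: G → γ_{k+1}(G)/γ_{k+2}(G) sending u ↦ (∏_{t=0}^{n-1} [u, x^{φ^{a_1}}, ..., z^{φ^{a_k}}]^{φ^t}) γ_{k+2}(G) is a group homomorphism whose image lies in C_{γ_{k+1}(G)/γ_{k+2}(G)}(φ); consequently |G : ker θ_{v⃗,a⃗}| ≤ |C_{L(G)}(φ)|. -/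
open Subgroup

open scoped commutatorElement

open scoped IsMulCommutative

section CFIX
variable {G : Type*} [Group G]

/-- fixed points of arbitrary power of a fixed coset -/
private lemma pow_coset_mem [Group G] (φ : MulAut G) (N : Subgroup G)
    (hNi : ∀ g ∈ N, φ g ∈ N) (x : G) (hx : (φ x)⁻¹ * x ∈ N) :
    ∀ t : ℕ, (∀ g ∈ N, (φ ^ t) g ∈ N) ∧ ((φ ^ t) x)⁻¹ * x ∈ N := by
  intro t
  induction t with
  | zero => simpa using N.one_mem
  | succ t ih =>
    have hNt : ∀ g ∈ N, (φ ^ (t+1)) g ∈ N := by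
      intro g hg
      have : (φ ^ (t+1)) g = (φ ^ t) (φ g) := by
        rw [pow_succ]; rfl
      rw [this]
      exact ih.1 _ (hNi g hg)
    refine ⟨hNt, ?_⟩
    have h1 : ((φ ^ (t+1)) x)⁻¹ * x
        = (φ ^ t) ((φ x)⁻¹ * x) * (((φ ^ t) x)⁻¹ * x) := by
      have : (φ ^ (t+1)) x = (φ ^ t) (φ x) := by rw [pow_succ]; rfl
      rw [this, map_mul, map_inv]
      group
    rw [h1]
    exact N.mul_mem (ih.1 _ hx) ih.2

private lemma prime_fix [Finite G] (p : ℕ) (hp : p.Prime) (ψ : MulAut G)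
    (hψ : ψ ^ p = 1) (N : Subgroup G) (hNi : ∀ g ∈ N, ψ g ∈ N)
    (hcard : ¬ p ∣ Nat.card N) (x : G) (hx : (ψ x)⁻¹ * x ∈ N) :
    ∃ y, ψ y = y ∧ y⁻¹ * x ∈ N := by
  let S := {g : G // g⁻¹ * x ∈ N}
  have hfS : ∀ g : S, (ψ (g : G))⁻¹ * x ∈ N := by
    intro g
    have h1 : (ψ (g : G))⁻¹ * x = ψ ((g : G)⁻¹ * x) * ((ψ x)⁻¹ * x) := by
      rw [map_mul, map_inv]; group
    rw [h1]
    exact N.mul_mem (hNi _ g.2) hx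
  let fS : S → S := fun g => ⟨ψ g, hfS g⟩
  have hinj : Function.Injective fS := by
    intro g₁ g₂ h
    exact Subtype.ext (ψ.injective (congrArg Subtype.val h))
  let σ : Equiv.Perm S := Equiv.ofBijective fS ((Finite.injective_iff_bijective).mp hinj)
  have hσ : ∀ (t : ℕ) (g : S), ((σ ^ t) g : G) = (ψ ^ t) (g : G) := by
    intro t
    induction t with
    | zero => intro g; rfl
    | succ t ih =>
      intro g
      have h1 : (σ ^ (t+1)) g = (σ ^ t) (σ g) := by
        rw [pow_succ]; rfl
      have h2 : ((ψ ^ (t+1))) (g : G) = (ψ ^ t) (ψ (g : G)) := by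
        rw [pow_succ]; rfl
      rw [h1, h2, ih (σ g)]; rfl
  have hσp : σ ^ p = 1 := by
    ext g
    show (((σ ^ p) g : S) : G) = _
    rw [hσ p g, hψ]
    rfl
  have hPG : IsPGroup p (Subgroup.zpowers σ) := by
    intro g
    refine ⟨1, ?_⟩
    obtain ⟨k, hk⟩ := Subgroup.mem_zpowers_iff.mp g.2
    have hgp : (g : Equiv.Perm S) ^ (p ^ 1) = 1 := by
      rw [← hk, pow_one, ← zpow_natCast, ← zpow_mul, mul_comm, zpow_mul, zpow_natCast, hσp,
        one_zpow]
    refine Subtype.ext ?_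
    rw [SubgroupClass.coe_pow, OneMemClass.coe_one]
    exact hgp
  have hcardS : Nat.card S = Nat.card N := by
    refine Nat.card_congr ⟨fun g => ⟨(g : G)⁻¹ * x, g.2⟩, fun ν => ⟨x * (ν : G)⁻¹, by simp⟩,
      fun g => by simp, fun ν => by simp⟩
  haveI : Fact p.Prime := ⟨hp⟩
  obtain ⟨a, ha⟩ := hPG.nonempty_fixed_point_of_prime_not_dvd_card S (by rw [hcardS]; exact hcard)
  have haf : σ a = a := ha ⟨σ, Subgroup.mem_zpowers σ⟩
  refine ⟨(a : G), ?_, a.2⟩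
  have := congrArg Subtype.val haf
  exact this

lemma cfix : ∀ (n : ℕ) {G : Type*} [Group G] [Finite G] (φ : MulAut G), φ ^ n = 1 →
    Nat.Coprime n (Nat.card G) → ∀ (N : Subgroup G), N.Normal →
    (∀ g ∈ N, φ g ∈ N) → ∀ x : G, (φ x)⁻¹ * x ∈ N →
    ∃ y, φ y = y ∧ y⁻¹ * x ∈ N := by
  intro n
  induction n using Nat.strong_induction_on with
  | _ n ih =>
    intro G _ _ φ hφn hcop N hNnorm hNi x hx
    match n, hφn, hcop, ih with
    | 0, hφn, hcop, _ =>
      have : Nat.card G = 1 := Nat.coprime_zero_left _ |>.mp hcop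
      have : Subsingleton G := Nat.card_eq_one_iff_unique.mp this |>.1
      exact ⟨x, Subsingleton.elim _ _, by simpa using N.one_mem⟩
    | 1, hφn, hcop, _ =>
      refine ⟨x, ?_, by simpa using N.one_mem⟩
      have : φ = 1 := by simpa using hφn
      rw [this]; rfl
    | (m + 2), hφn, hcop, ih =>
      set n := m + 2 with hn
      have hn2 : 2 ≤ n := by omega
      have hp : (n.minFac).Prime := Nat.minFac_prime (by omega)
      set p := n.minFac with hpdef
      set q := n / p with hq
      have hqp : q * p = n := Nat.div_mul_cancel (Nat.minFac_dvd n)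
      have hqlt : q < n := Nat.div_lt_self (by omega) hp.one_lt
      set ψ := φ ^ q with hψdef
      have hψp : ψ ^ p = 1 := by rw [hψdef, ← pow_mul, hqp, hφn]
      -- fixed point of ψ in the coset
      have hNq := pow_coset_mem φ N hNi x hx q
      have hpcard : ¬ p ∣ Nat.card N := by
        intro hdvd
        have h1 : p ∣ Nat.card G := hdvd.trans N.card_subgroup_dvd_card
        have h2 : p ∣ n := Nat.minFac_dvd n
        exact hp.ne_one (Nat.dvd_one.mp (hcop ▸ Nat.dvd_gcd h2 h1))
      obtain ⟨xf, hxf, hxfx⟩ := prime_fix p hp ψ hψp N hNq.1 hpcard x hNq.2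
      -- the subgroup of ψ-fixed points
      let F : Subgroup G :=
        { carrier := {g | ψ g = g}
          one_mem' := map_one ψ
          mul_mem' := fun ha hb => by simp_all [map_mul]
          inv_mem' := fun ha => by simp_all [map_inv] }
      have hmemF : ∀ {g : G}, g ∈ F ↔ ψ g = g := Iff.rfl
      have hcomm : ∀ g : G, φ (ψ g) = ψ (φ g) := by
        intro g
        have : φ * ψ = ψ * φ := by
          rw [hψdef, ← pow_succ', ← pow_succ]
        calc φ (ψ g) = (φ * ψ) g := rfl
        _ = (ψ * φ) g := by rw [this]
        _ = ψ (φ g) := rfl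
      have hφF : ∀ g ∈ F, φ g ∈ F := by
        intro g hg
        show ψ (φ g) = φ g
        rw [← hcomm, hmemF.mp hg]
      have hφsymmF : ∀ g ∈ F, φ.symm g ∈ F := by
        intro g hg
        show ψ (φ.symm g) = φ.symm g
        have : φ (ψ (φ.symm g)) = ψ g := by rw [hcomm, MulEquiv.apply_symm_apply]
        calc ψ (φ.symm g) = φ.symm (φ (ψ (φ.symm g))) := by rw [MulEquiv.symm_apply_apply]
        _ = φ.symm (ψ g) := by rw [this]
        _ = φ.symm g := by rw [hmemF.mp hg]
      let φ' : MulAut F :=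
        { toFun := fun g => ⟨φ g, hφF g g.2⟩
          invFun := fun g => ⟨φ.symm g, hφsymmF g g.2⟩
          left_inv := fun g => Subtype.ext (φ.symm_apply_apply (g : G))
          right_inv := fun g => Subtype.ext (φ.apply_symm_apply (g : G))
          map_mul' := fun g h => Subtype.ext (map_mul φ (g : G) (h : G)) }
      have hφ't : ∀ (t : ℕ) (g : F), ((φ' ^ t) g : G) = (φ ^ t) (g : G) := by
        intro t
        induction t with
        | zero => intro g; rfl
        | succ t iht =>
          intro g
          have h1 : (φ' ^ (t+1)) g = (φ' ^ t) (φ' g) := by rw [pow_succ]; rfl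
          have h2 : (φ ^ (t+1)) (g : G) = (φ ^ t) (φ (g : G)) := by rw [pow_succ]; rfl
          rw [h1, h2, iht (φ' g)]; rfl
      have hφ'q : φ' ^ q = 1 := by
        ext g
        show (((φ' ^ q) g : F) : G) = (g : G)
        rw [hφ't q g, ← hψdef]
        exact hmemF.mp g.2
      have hcop' : Nat.Coprime q (Nat.card F) := by
        exact Nat.Coprime.coprime_dvd_left ⟨p, hqp.symm⟩
          (hcop.coprime_dvd_right F.card_subgroup_dvd_card)
      let N' : Subgroup F := N.subgroupOf F
      have hN'norm : N'.Normal := (hNnorm.comap F.subtype : (N.comap F.subtype).Normal)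
      have hN'i : ∀ g ∈ N', φ' g ∈ N' := by
        intro g hg
        exact hNi _ hg
      have hxfF : xf ∈ F := hxf
      have hx' : (φ' ⟨xf, hxfF⟩)⁻¹ * ⟨xf, hxfF⟩ ∈ N' := by
        show ((φ' ⟨xf, hxfF⟩)⁻¹ * ⟨xf, hxfF⟩ : F) ∈ N.subgroupOf F
        rw [Subgroup.mem_subgroupOf]
        show (φ xf)⁻¹ * xf ∈ N
        have h1 : (φ xf)⁻¹ * xf = φ (xf⁻¹ * x) * ((φ x)⁻¹ * x) * (xf⁻¹ * x)⁻¹ := by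
          rw [map_mul, map_inv]; group
        rw [h1]
        exact N.mul_mem (N.mul_mem (hNi _ hxfx) hx) (N.inv_mem hxfx)
      obtain ⟨y', hy'fix, hy'mem⟩ := ih q hqlt φ' hφ'q hcop' N' hN'norm hN'i ⟨xf, hxfF⟩ hx'
      refine ⟨(y' : G), ?_, ?_⟩
      · have := congrArg Subtype.val hy'fix
        exact this
      · rw [Subgroup.mem_subgroupOf] at hy'mem
        have h2 : (y' : G)⁻¹ * xf ∈ N := hy'mem
        have h3 : (y' : G)⁻¹ * x = ((y' : G)⁻¹ * xf) * (xf⁻¹ * x) := by group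
        rw [h3]
        exact N.mul_mem h2 hxfx

end CFIX


section COMM
variable {G : Type*} [Group G]

private lemma lcs_comm_mem {j : ℕ} {x : G} (hx : x ∈ (⊤ : Subgroup G).lowerCentralSeries j) (g : G) :
    ⁅x, g⁆ ∈ (⊤ : Subgroup G).lowerCentralSeries (j + 1) :=
  commutator_mem_commutator hx (mem_top g)

private lemma lcs_comm_mem' {j : ℕ} {x : G} (hx : x ∈ (⊤ : Subgroup G).lowerCentralSeries (j+1)) (g : G) :
    ⁅x, g⁆ ∈ (⊤ : Subgroup G).lowerCentralSeries (j + 2) :=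
  commutator_mem_commutator hx (mem_top g)

private lemma foldl_mem (l : List G) : ∀ (j : ℕ) (u : G), u ∈ (⊤ : Subgroup G).lowerCentralSeries j →
    List.foldl (fun y z => ⁅y, z⁆) u l ∈ (⊤ : Subgroup G).lowerCentralSeries (j + l.length) := by
  induction l with
  | nil => intro j u hu; simpa using hu
  | cons z l ih =>
    intro j u hu
    have h1 : j + (z :: l).length = (j + 1) + l.length := by simp; omega
    rw [h1, List.foldl_cons]
    exact ih (j+1) ⁅u, z⁆ (lcs_comm_mem hu z)

private lemma foldl_err (l : List G) : ∀ (j : ℕ) (x ν : G), x ∈ (⊤ : Subgroup G).lowerCentralSeries j →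
    ν ∈ (⊤ : Subgroup G).lowerCentralSeries (j + 1) →
    (List.foldl (fun y z => ⁅y, z⁆) x l)⁻¹ * List.foldl (fun y z => ⁅y, z⁆) (x * ν) l
      ∈ (⊤ : Subgroup G).lowerCentralSeries (j + l.length + 1) := by
  induction l with
  | nil => intro j x ν hx hν; simpa using hν
  | cons z l ih =>
    intro j x ν hx hν
    have key : ⁅x * ν, z⁆ = ⁅x, z⁆ * (⁅x, z⁆⁻¹ * (x * ⁅ν, z⁆ * x⁻¹) * ⁅x, z⁆) := by group
    have hδ : ⁅x, z⁆⁻¹ * (x * ⁅ν, z⁆ * x⁻¹) * ⁅x, z⁆ ∈ (⊤ : Subgroup G).lowerCentralSeries (j + 2) := by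
      have h1 : ⁅ν, z⁆ ∈ (⊤ : Subgroup G).lowerCentralSeries (j + 2) := lcs_comm_mem' hν z
      have h2 := (Subgroup.lowerCentralSeries_normal ⊤ (j+2)).conj_mem _ h1 x
      have h3 := (Subgroup.lowerCentralSeries_normal ⊤ (j+2)).conj_mem _ h2 ⁅x, z⁆⁻¹
      simpa [mul_assoc] using h3
    have h1 : j + (z :: l).length + 1 = (j + 1) + l.length + 1 := by simp; omega
    rw [h1, List.foldl_cons, List.foldl_cons, key]
    exact ih (j+1) ⁅x, z⁆ _ (lcs_comm_mem hx z) hδ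

private lemma foldl_mul (l : List G) : ∀ (j : ℕ) (u₁ u₂ : G), u₁ ∈ (⊤ : Subgroup G).lowerCentralSeries j →
    u₂ ∈ (⊤ : Subgroup G).lowerCentralSeries j →
    (List.foldl (fun y z => ⁅y, z⁆) u₁ l * List.foldl (fun y z => ⁅y, z⁆) u₂ l)⁻¹ *
      List.foldl (fun y z => ⁅y, z⁆) (u₁ * u₂) l
      ∈ (⊤ : Subgroup G).lowerCentralSeries (j + l.length + 1) := by
  induction l with
  | nil =>
    intro j u₁ u₂ _ _
    simp only [List.foldl_nil, List.length_nil, Nat.add_zero]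
    have h0 : (u₁ * u₂)⁻¹ * (u₁ * u₂) = 1 := by group
    rw [h0]
    exact ((⊤ : Subgroup G).lowerCentralSeries (j + 1)).one_mem
  | cons z l ih =>
    intro j u₁ u₂ hu₁ hu₂
    have hA : ⁅u₁, z⁆ ∈ (⊤ : Subgroup G).lowerCentralSeries (j+1) := lcs_comm_mem hu₁ z
    have hB : ⁅u₂, z⁆ ∈ (⊤ : Subgroup G).lowerCentralSeries (j+1) := lcs_comm_mem hu₂ z
    have hν : (⁅u₁, z⁆ * ⁅u₂, z⁆)⁻¹ * ⁅u₁ * u₂, z⁆ ∈ (⊤ : Subgroup G).lowerCentralSeries (j + 2) := by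
      have key : (⁅u₁, z⁆ * ⁅u₂, z⁆)⁻¹ * ⁅u₁ * u₂, z⁆ =
          ⁅⁅u₂, z⁆⁻¹, ⁅u₁, z⁆⁻¹⁆ * (⁅u₁, z⁆⁻¹ * ⁅⁅u₂, z⁆⁻¹, u₁⁆ * ⁅u₁, z⁆) := by group
      rw [key]
      have h1 : ⁅⁅u₂, z⁆⁻¹, ⁅u₁, z⁆⁻¹⁆ ∈ (⊤ : Subgroup G).lowerCentralSeries (j + 2) :=
        commutator_mem_commutator (inv_mem hB) (mem_top _)
      have h2 : ⁅⁅u₂, z⁆⁻¹, u₁⁆ ∈ (⊤ : Subgroup G).lowerCentralSeries (j + 2) :=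
        commutator_mem_commutator (inv_mem hB) (mem_top _)
      have h3 := (Subgroup.lowerCentralSeries_normal ⊤ (j+2)).conj_mem _ h2 ⁅u₁, z⁆⁻¹
      refine mul_mem h1 ?_
      simpa [mul_assoc] using h3
    have hsplit : ⁅u₁ * u₂, z⁆ =
        (⁅u₁, z⁆ * ⁅u₂, z⁆) * ((⁅u₁, z⁆ * ⁅u₂, z⁆)⁻¹ * ⁅u₁ * u₂, z⁆) := by group
    have h1 : j + (z :: l).length + 1 = (j + 1) + l.length + 1 := by simp; omega
    rw [h1, List.foldl_cons, List.foldl_cons, List.foldl_cons, hsplit]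
    have e1 := foldl_err l (j+1) (⁅u₁, z⁆ * ⁅u₂, z⁆) _ (mul_mem hA hB) hν
    have e2 := ih (j+1) _ _ hA hB
    set f := fun (y z : G) => ⁅y, z⁆
    set P := List.foldl f (⁅u₁, z⁆ * ⁅u₂, z⁆) l
    set R := List.foldl f (⁅u₁, z⁆ * ⁅u₂, z⁆ * ((⁅u₁, z⁆ * ⁅u₂, z⁆)⁻¹ * ⁅u₁ * u₂, z⁆)) l
    have hid : (List.foldl f ⁅u₁, z⁆ l * List.foldl f ⁅u₂, z⁆ l)⁻¹ * R =
        ((List.foldl f ⁅u₁, z⁆ l * List.foldl f ⁅u₂, z⁆ l)⁻¹ * P) * (P⁻¹ * R) := by group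
    rw [hid]
    exact mul_mem e2 e1

private lemma list_range_prod {M : Type*} [CommMonoid M] (g : ℕ → M) (n : ℕ) :
    ∏ t ∈ Finset.range n, g t = ((List.range n).map g).prod := by
  induction n with
  | zero => simp
  | succ n ih => rw [Finset.prod_range_succ, List.range_succ]; simp [ih]

end COMM


section MAIN

/-- For a finite group G with automorphism φ of order n coprime to |G|, fixed
elements v₁,…,v_k and exponents a₁,…,a_k, the map
u ↦ (∏_{t<n} φ^t([u, v₁^{φ^{a₁}}, …, v_k^{φ^{a_k}}])) mod γ_{k+2}(G)
is a homomorphism θ : G → γ_{k+1}/γ_{k+2}-level quotient whose image consists of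
φ-fixed points; consequently its kernel has index at most |C_G(φ)|
( = |C_{L(G)}(φ)| by coprimality). -/
theorem stmt_18 {G : Type*} [Group G] [Finite G]
    (φ : MulAut G) (n : ℕ) (hn : orderOf φ = n)
    (hcop : Nat.Coprime n (Nat.card G))
    (k : ℕ) (v : Fin k → G) (a : Fin k → ℕ)
    (hinv : (⊤ : Subgroup G).lowerCentralSeries (k + 1) ≤
      ((⊤ : Subgroup G).lowerCentralSeries (k + 1)).comap φ.toMonoidHom) :
    ∃ Θ : G →* G ⧸ (⊤ : Subgroup G).lowerCentralSeries (k + 1),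
      (∀ u : G, Θ u = QuotientGroup.mk
        (((List.range n).map fun t =>
          (φ ^ t) (List.foldl (fun y z => ⁅y, z⁆) u
            (List.ofFn fun s => (φ ^ (a s)) (v s)))).prod)) ∧
      (∀ u : G, QuotientGroup.map ((⊤ : Subgroup G).lowerCentralSeries (k + 1))
          ((⊤ : Subgroup G).lowerCentralSeries (k + 1)) φ.toMonoidHom hinv (Θ u) = Θ u) ∧
      Θ.ker.index ≤ Nat.card { g : G // φ g = g } := by
  classical
  set w : List G := List.ofFn fun s => (φ ^ (a s)) (v s) with hw
  set f : G → G := fun u => List.foldl (fun y z => ⁅y, z⁆) u w with hf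
  have hwlen : w.length = k := List.length_ofFn
  have hφn : φ ^ n = 1 := by rw [← hn]; exact pow_orderOf_eq_one φ
  have hfmem : ∀ u, f u ∈ (⊤ : Subgroup G).lowerCentralSeries k := by
    intro u
    have h := foldl_mem w 0 u (mem_top u)
    rwa [hwlen, Nat.zero_add] at h
  have hφj : ∀ (ρ : MulAut G) (j : ℕ) (g : G), g ∈ (⊤ : Subgroup G).lowerCentralSeries j →
      ρ g ∈ (⊤ : Subgroup G).lowerCentralSeries j := fun ρ j g hg =>
    lowerCentralSeries.map ρ.toMonoidHom j (Subgroup.mem_map_of_mem _ hg)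
  have hcent : ∀ g : G, g ∈ (⊤ : Subgroup G).lowerCentralSeries k →
      (QuotientGroup.mk g : G ⧸ (⊤ : Subgroup G).lowerCentralSeries (k + 1)) ∈
        Subgroup.center (G ⧸ (⊤ : Subgroup G).lowerCentralSeries (k + 1)) := by
    intro g hg
    rw [Subgroup.mem_center_iff]
    intro q
    obtain ⟨h, rfl⟩ := QuotientGroup.mk_surjective q
    rw [← QuotientGroup.mk_mul, ← QuotientGroup.mk_mul, QuotientGroup.eq]
    have hid : (h * g)⁻¹ * (g * h) = ⁅g⁻¹, h⁻¹⁆ := by group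
    rw [hid]
    exact commutator_mem_commutator (inv_mem hg) (mem_top _)
  have hνmem : ∀ u₁ u₂ : G, (f u₁ * f u₂)⁻¹ * f (u₁ * u₂) ∈ (⊤ : Subgroup G).lowerCentralSeries (k + 1) := by
    intro u₁ u₂
    have h := foldl_mul w 0 u₁ u₂ (mem_top _) (mem_top _)
    rwa [hwlen, Nat.zero_add] at h
  have hmkmul : ∀ (t : ℕ) (u₁ u₂ : G),
      (QuotientGroup.mk ((φ ^ t) (f (u₁ * u₂))) : G ⧸ (⊤ : Subgroup G).lowerCentralSeries (k + 1)) =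
        QuotientGroup.mk ((φ ^ t) (f u₁)) * QuotientGroup.mk ((φ ^ t) (f u₂)) := by
    intro t u₁ u₂
    rw [← QuotientGroup.mk_mul, QuotientGroup.eq]
    have hid : ((φ ^ t) (f (u₁ * u₂)))⁻¹ * ((φ ^ t) (f u₁) * (φ ^ t) (f u₂)) =
        (φ ^ t) (((f u₁ * f u₂)⁻¹ * f (u₁ * u₂))⁻¹) := by
      simp [map_mul, map_inv, mul_assoc]
    rw [hid]
    exact hφj (φ ^ t) (k+1) _ (inv_mem (hνmem u₁ u₂))
  -- the homomorphisms into the center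
  let C := Subgroup.center (G ⧸ (⊤ : Subgroup G).lowerCentralSeries (k + 1))
  let χ : ℕ → (G →* C) := fun t => MonoidHom.mk'
    (fun u => ⟨QuotientGroup.mk ((φ ^ t) (f u)), hcent _ (hφj (φ ^ t) k _ (hfmem u))⟩)
    (fun u₁ u₂ => Subtype.ext (hmkmul t u₁ u₂))
  let Θ : G →* G ⧸ (⊤ : Subgroup G).lowerCentralSeries (k + 1) :=
    C.subtype.comp (∏ t ∈ Finset.range n, χ t)
  have hform0 : ∀ u : G, Θ u =
      ((List.range n).map fun t =>
        (QuotientGroup.mk ((φ ^ t) (f u)) : G ⧸ (⊤ : Subgroup G).lowerCentralSeries (k + 1))).prod := by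
    intro u
    have h1 : Θ u = ((∏ t ∈ Finset.range n, χ t) u : G ⧸ (⊤ : Subgroup G).lowerCentralSeries (k + 1)) := rfl
    rw [h1, MonoidHom.finset_prod_apply, list_range_prod]
    show C.subtype (((List.range n).map fun x => χ x u).prod) = _
    rw [map_list_prod, List.map_map]
    rfl
  have hform : ∀ u : G, Θ u = QuotientGroup.mk
      (((List.range n).map fun t => (φ ^ t) (f u)).prod) := by
    intro u
    rw [hform0 u]
    have h2 := map_list_prod (QuotientGroup.mk' ((⊤ : Subgroup G).lowerCentralSeries (k + 1)))
      ((List.range n).map fun t => (φ ^ t) (f u))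
    simp only [QuotientGroup.mk'_apply, List.map_map] at h2
    rw [h2]
    rfl
  have hfixθ : ∀ u : G, QuotientGroup.map ((⊤ : Subgroup G).lowerCentralSeries (k + 1))
      ((⊤ : Subgroup G).lowerCentralSeries (k + 1)) φ.toMonoidHom hinv (Θ u) = Θ u := by
    intro u
    rw [hform u]
    rw [QuotientGroup.map_mk]
    have h3 : (φ.toMonoidHom) (((List.range n).map fun t => (φ ^ t) (f u)).prod) =
        ((List.range n).map fun t => (φ ^ (t + 1)) (f u)).prod := by
      rw [map_list_prod]
      simp only [List.map_map]
      congr 1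
      apply List.map_congr_left
      intro t _
      show φ ((φ ^ t) (f u)) = (φ ^ (t + 1)) (f u)
      rw [pow_succ']
      rfl
    rw [h3]
    -- now compare products of central elements
    let hq : ℕ → C := fun t => ⟨QuotientGroup.mk ((φ ^ t) (f u)),
      hcent _ (hφj (φ ^ t) k _ (hfmem u))⟩
    have hcast : ∀ (g : ℕ → ℕ), ((List.range n).map fun t => (QuotientGroup.mk
        ((φ ^ (g t)) (f u)) : G ⧸ (⊤ : Subgroup G).lowerCentralSeries (k + 1))).prod
        = (C.subtype) (((List.range n).map fun t => hq (g t)).prod) := by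
      intro g
      rw [map_list_prod]
      simp only [List.map_map]
      rfl
    have hmk1 : ((List.range n).map fun t => (QuotientGroup.mk ((φ ^ (t+1)) (f u)) :
        G ⧸ (⊤ : Subgroup G).lowerCentralSeries (k + 1))).prod = (C.subtype)
        (((List.range n).map fun t => hq (t+1)).prod) := hcast (fun t => t + 1)
    have hmk0 : ((List.range n).map fun t => (QuotientGroup.mk ((φ ^ t) (f u)) :
        G ⧸ (⊤ : Subgroup G).lowerCentralSeries (k + 1))).prod = (C.subtype)
        (((List.range n).map fun t => hq t).prod) := hcast id
    have hmklhs : (QuotientGroup.mk (((List.range n).map fun t => (φ ^ (t+1)) (f u)).prod) :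
        G ⧸ (⊤ : Subgroup G).lowerCentralSeries (k + 1)) =
        ((List.range n).map fun t => (QuotientGroup.mk ((φ ^ (t+1)) (f u)) :
          G ⧸ (⊤ : Subgroup G).lowerCentralSeries (k + 1))).prod := by
      have h2 := map_list_prod (QuotientGroup.mk' ((⊤ : Subgroup G).lowerCentralSeries (k + 1)))
        ((List.range n).map fun t => (φ ^ (t+1)) (f u))
      simp only [QuotientGroup.mk'_apply, List.map_map] at h2
      rw [h2]; rfl
    have hmkrhs : (QuotientGroup.mk (((List.range n).map fun t => (φ ^ t) (f u)).prod) :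
        G ⧸ (⊤ : Subgroup G).lowerCentralSeries (k + 1)) =
        ((List.range n).map fun t => (QuotientGroup.mk ((φ ^ t) (f u)) :
          G ⧸ (⊤ : Subgroup G).lowerCentralSeries (k + 1))).prod := by
      have h2 := map_list_prod (QuotientGroup.mk' ((⊤ : Subgroup G).lowerCentralSeries (k + 1)))
        ((List.range n).map fun t => (φ ^ t) (f u))
      simp only [QuotientGroup.mk'_apply, List.map_map] at h2
      rw [h2]; rfl
    rw [hmklhs, hmkrhs, hmk1, hmk0]
    congr 1
    -- in the commutative group C
    rw [← list_range_prod, ← list_range_prod]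
    have hq0 : hq n = hq 0 := by
      apply Subtype.ext
      show (QuotientGroup.mk ((φ ^ n) (f u)) : G ⧸ (⊤ : Subgroup G).lowerCentralSeries (k + 1)) = _
      rw [hφn]
      rfl
    cases n with
    | zero => rw [Finset.prod_range_zero, Finset.prod_range_zero]
    | succ m =>
      have e1 := Finset.prod_range_succ' hq (m + 1)
      have e2 := Finset.prod_range_succ hq (m + 1)
      rw [e2, hq0] at e1
      exact mul_right_cancel e1.symm
  refine ⟨Θ, fun u => hform u, hfixθ, ?_⟩
  rw [Subgroup.index_ker]
  haveI : Finite (G ⧸ (⊤ : Subgroup G).lowerCentralSeries (k + 1)) := Quotient.finite _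
  have h1 : Nat.card Θ.range ≤ Nat.card {q : G ⧸ (⊤ : Subgroup G).lowerCentralSeries (k + 1) //
      QuotientGroup.map ((⊤ : Subgroup G).lowerCentralSeries (k + 1)) ((⊤ : Subgroup G).lowerCentralSeries (k + 1))
        φ.toMonoidHom hinv q = q} := by
    refine Nat.card_le_card_of_injective (fun q => ⟨q.1, ?_⟩) ?_
    · obtain ⟨u, hu⟩ := MonoidHom.mem_range.mp q.2
      rw [← hu]
      exact hfixθ u
    · intro q₁ q₂ h
      exact Subtype.ext (congrArg Subtype.val h :)
  have h2 : Nat.card {q : G ⧸ (⊤ : Subgroup G).lowerCentralSeries (k + 1) //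
      QuotientGroup.map ((⊤ : Subgroup G).lowerCentralSeries (k + 1)) ((⊤ : Subgroup G).lowerCentralSeries (k + 1))
        φ.toMonoidHom hinv q = q} ≤ Nat.card {g : G // φ g = g} := by
    refine Nat.card_le_card_of_surjective
      (fun g => ⟨QuotientGroup.mk g.1, ?_⟩) ?_
    · rw [QuotientGroup.map_mk]
      exact congrArg QuotientGroup.mk g.2
    · rintro ⟨q, hq⟩
      obtain ⟨x, rfl⟩ := QuotientGroup.mk_surjective q
      rw [QuotientGroup.map_mk] at hq
      have hx : (φ x)⁻¹ * x ∈ (⊤ : Subgroup G).lowerCentralSeries (k + 1) := (QuotientGroup.eq).mp hq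
      obtain ⟨y, hy1, hy2⟩ := cfix n φ hφn hcop ((⊤ : Subgroup G).lowerCentralSeries (k + 1))
        inferInstance (fun g hg => hinv hg) x hx
      exact ⟨⟨y, hy1⟩, Subtype.ext (QuotientGroup.eq.mpr hy2)⟩
  exact le_trans h1 h2
end MAIN
end
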